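/- For every natural number k and every real t, Σ_{r=0}^∞ (r)_k t^r/r! = e^t Σ_{j=0}^k L(k,j) t^j, where r runs over nonnegative integers. -/

import Mathlib

open Finset MeasureTheory Real

/-- Stirling numbers of the second kind. -/
def stirling2 : ℕ → ℕ → ℕ
  | 0, 0 => 1
  | 0, _ + 1 => 0
  | _ + 1, 0 => 0
  | n + 1, k + 1 => (k + 1) * stirling2 n (k + 1) + stirling2 n k

/-- The generalized geometric polynomials `ω_{n,r}(x) = Σ_{k=0}^n S(n,k) (r)_k x^k`,
where `(r)_k` is the rising factorial (Pochhammer symbol). -/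
noncomputable def geomPoly (n : ℕ) (r x : ℝ) : ℝ :=
  ∑ k ∈ Finset.range (n + 1), (stirling2 n k : ℝ) * (ascPochhammer ℝ k).eval r * x ^ k

/-- The exponential polynomials `φ_n(x) = Σ_{k=0}^n S(n,k) x^k`. -/
noncomputable def expPoly (n : ℕ) (x : ℝ) : ℝ :=
  ∑ k ∈ Finset.range (n + 1), (stirling2 n k : ℝ) * x ^ k
/-- The (unsigned) Lah numbers: `L(n,k) = (n!/k!) C(n-1,k-1)` for `n, k ≥ 1`,
`L(0,0) = 1`, `L(n,0) = 0` for `n ≥ 1` (and `L(n,k) = 0` for `k > n`). -/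
def lah : ℕ → ℕ → ℕ
  | 0, 0 => 1
  | 0, _ + 1 => 0
  | _ + 1, 0 => 0
  | n + 1, k + 1 => (n + 1).factorial / (k + 1).factorial * Nat.choose n k

lemma lah_succ_mul_fact (m i : ℕ) (hi : i ≤ m) :
    lah (m + 1) (i + 1) * (i + 1).factorial = (m + 1).factorial * Nat.choose m i := by
  show (m + 1).factorial / (i + 1).factorial * Nat.choose m i * (i + 1).factorial
      = (m + 1).factorial * Nat.choose m i
  have hdvd : (i + 1).factorial ∣ (m + 1).factorial :=
    Nat.factorial_dvd_factorial (by omega)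
  rw [mul_right_comm, Nat.div_mul_cancel hdvd]

lemma asc_eq_sum_lah_desc (k n : ℕ) :
    n.ascFactorial k = ∑ j ∈ Finset.range (k + 1), lah k j * n.descFactorial j := by
  cases k with
  | zero => simp [lah]
  | succ m =>
    rw [Finset.sum_range_succ']
    have h0 : lah (m + 1) 0 = 0 := rfl
    rw [h0, Nat.zero_mul, Nat.add_zero]
    have hterm : ∀ i ∈ Finset.range (m + 1),
        lah (m + 1) (i + 1) * n.descFactorial (i + 1)
          = (m + 1).factorial * (Nat.choose n (i + 1) * Nat.choose m i) := by
      intro i hi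
      rw [Finset.mem_range] at hi
      rw [Nat.descFactorial_eq_factorial_mul_choose, ← Nat.mul_assoc,
        lah_succ_mul_fact m i (by omega)]
      ring
    rw [Finset.sum_congr rfl hterm, ← Finset.mul_sum]
    rw [Nat.ascFactorial_eq_factorial_mul_choose']
    have : n + (m + 1) - 1 = n + m := by omega
    rw [this]
    congr 1
    rw [Nat.add_choose_eq n m (m + 1), Finset.Nat.sum_antidiagonal_eq_sum_range_succ_mk,
      Finset.sum_range_succ']
    have h00 : Nat.choose n 0 * Nat.choose m (m + 1 - 0) = 0 := by
      simp [Nat.choose_eq_zero_of_lt (by omega : m < m + 1)]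
    rw [h00, Nat.add_zero]
    refine Finset.sum_congr rfl fun i hi => ?_
    rw [Finset.mem_range] at hi
    have : m + 1 - (i + 1) = m - i := by omega
    rw [this]
    simp only
    rw [Nat.choose_symm (by omega : i ≤ m)]

lemma desc_hasSum (j : ℕ) (t : ℝ) :
    HasSum (fun r : ℕ => (r.descFactorial j : ℝ) * t ^ r / r.factorial)
      (Real.exp t * t ^ j) := by
  have hexp : HasSum (fun n : ℕ => t ^ n / n.factorial) (Real.exp t) := by
    rw [Real.exp_eq_exp_ℝ]
    exact NormedSpace.expSeries_div_hasSum_exp t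
  have h := hexp.mul_left (t ^ j)
  have hinj : Function.Injective (fun m : ℕ => m + j) :=
    fun a b hab => by simpa using hab
  have hvan : ∀ x ∉ Set.range (fun m : ℕ => m + j),
      (x.descFactorial j : ℝ) * t ^ x / x.factorial = 0 := by
    intro x hx
    have hxj : x < j := by
      by_contra hc
      exact hx ⟨x - j, by show x - j + j = x; omega⟩
    simp [Nat.descFactorial_eq_zero_iff_lt.mpr hxj]
  have h2 : HasSum (fun m : ℕ =>
      (((m + j).descFactorial j : ℝ)) * t ^ (m + j) / ((m + j).factorial : ℝ))
      (t ^ j * Real.exp t) := by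
    have e : (fun m : ℕ =>
        (((m + j).descFactorial j : ℝ)) * t ^ (m + j) / ((m + j).factorial : ℝ))
        = fun m : ℕ => t ^ j * (t ^ m / m.factorial) := by
      funext m
      have key : (m + j).descFactorial j * m.factorial = (m + j).factorial := by
        rw [Nat.descFactorial_eq_factorial_mul_choose]
        rw [← Nat.add_choose_mul_factorial_mul_factorial m j]
        ring
      have keyR : ((m + j).descFactorial j : ℝ) * m.factorial = (m + j).factorial := by
        exact_mod_cast congrArg (Nat.cast : ℕ → ℝ) key
      have hf : ((m + j).factorial : ℝ) ≠ 0 := Nat.cast_ne_zero.mpr (Nat.factorial_ne_zero _)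
      have hm : (m.factorial : ℝ) ≠ 0 := Nat.cast_ne_zero.mpr (Nat.factorial_ne_zero _)
      field_simp
      rw [pow_add]
      linear_combination (t ^ m * t ^ j) * keyR
    rw [e]
    exact h
  have h3 := (hinj.hasSum_iff hvan).mp h2
  rw [mul_comm]
  exact h3


/-- For every natural `k` and real `t`,
`Σ_{r=0}^∞ (r)_k t^r/r! = e^t Σ_{j=0}^k L(k,j) t^j`. -/
theorem pochhammer_egf_lah (k : ℕ) (t : ℝ) :
    HasSum (fun r : ℕ => (ascPochhammer ℝ k).eval (r : ℝ) * t ^ r / r.factorial)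
      (Real.exp t * ∑ j ∈ Finset.range (k + 1), (lah k j : ℝ) * t ^ j) := by
  have H : HasSum
      (fun r : ℕ => ∑ j ∈ Finset.range (k + 1),
        (lah k j : ℝ) * ((r.descFactorial j : ℝ) * t ^ r / r.factorial))
      (∑ j ∈ Finset.range (k + 1), (lah k j : ℝ) * (Real.exp t * t ^ j)) :=
    hasSum_sum fun j _ => (desc_hasSum j t).mul_left _
  have e1 : (fun r : ℕ => (ascPochhammer ℝ k).eval (r : ℝ) * t ^ r / r.factorial)
      = fun r : ℕ => ∑ j ∈ Finset.range (k + 1),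
        (lah k j : ℝ) * ((r.descFactorial j : ℝ) * t ^ r / r.factorial) := by
    funext r
    have h1 : (ascPochhammer ℝ k).eval (r : ℝ) = (r.ascFactorial k : ℝ) := by
      rw [← ascPochhammer_eval_cast, ascPochhammer_nat_eq_ascFactorial]
    rw [h1, asc_eq_sum_lah_desc, Nat.cast_sum, Finset.sum_mul, Finset.sum_div]
    refine Finset.sum_congr rfl fun j _ => ?_
    push_cast
    ring
  have e2 : (∑ j ∈ Finset.range (k + 1), (lah k j : ℝ) * (Real.exp t * t ^ j))
      = Real.exp t * ∑ j ∈ Finset.range (k + 1), (lah k j : ℝ) * t ^ j := by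
    rw [Finset.mul_sum]
    exact Finset.sum_congr rfl fun j _ => by ring
  rw [e1, ← e2]
  exact H
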